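/- Let Q be a quiver and ℵ an infinite cardinal with ℵ ≥ sup{|R|, |V|, |E|}, where V and E are the vertex and edge sets of Q. Then for every representation M of Q and every element x ∈ M(v) for some vertex v, there exists a subrepresentation P ⊆ M such that x ∈ P(v), |P| ≤ ℵ, and P(w) is a pure submodule of M(w) for every vertex w. -/

import Mathlib

open CategoryTheory CategoryTheory.Limits

/-- The category of representations of a quiver by `R`-modules. -/
abbrev QRep (V : Type) [Quiver.{0} V] (R : Type) [Ring R] := Paths V ⥤ ModuleCat.{0,0} R

/-- A submodule `A ⊆ B` is pure if `L ⊗ A → L ⊗ B` is injective for every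
module `L`. -/
def IsPureSubmodule {R M : Type} [CommRing R] [AddCommGroup M] [Module R M]
    (A : Submodule R M) : Prop :=
  ∀ (L : Type) [AddCommGroup L] [Module R L],
    Function.Injective (LinearMap.lTensor L A.subtype)

/-- A subrepresentation of a representation `M`: a submodule at each vertex,
stable under the arrow maps. -/
structure Subrep {V : Type} [Quiver.{0} V] {R : Type} [CommRing R] (M : QRep V R) where
  carrier : ∀ v : V, Submodule R (M.obj ((Paths.of V).obj v))
  map_mem : ∀ {v w : V} (a : v ⟶ w) (x), x ∈ carrier v →
    (M.map a.toPath).hom x ∈ carrier w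

section Solv

variable {R : Type} [CommRing R] {N : Type} [AddCommGroup N] [Module R N]

/-- `SolvIn A B`: every finite linear system with constants in `A` that is solvable in `N`
has a solution with values in `B`. -/
def SolvIn (A B : Submodule R N) : Prop :=
  ∀ (n k : ℕ) (r : Fin n → Fin k → R) (a : Fin n → N),
    (∀ i, a i ∈ A) → (∃ m : Fin k → N, ∀ i, a i = ∑ j, r i j • m j) →
    ∃ b : Fin k → N, (∀ j, b j ∈ B) ∧ ∀ i, a i = ∑ j, r i j • b j

open TensorProduct LinearMap

theorem ker_rTensor_eq {L F : Type} [AddCommGroup L] [Module R L] [AddCommGroup F] [Module R F]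
    (q : F →ₗ[R] L) (hqs : Function.Surjective q) :
    LinearMap.ker (LinearMap.rTensor N q)
      = LinearMap.range (LinearMap.rTensor N (LinearMap.ker q).subtype) :=
  (rTensor_exact N (LinearMap.exact_subtype_ker_map q) hqs).linearMap_ker_eq

set_option maxHeartbeats 1000000 in
theorem isPure_of_solv (A : Submodule R N) (h : SolvIn A A) : IsPureSubmodule A := by
  intro L _ _
  rw [injective_iff_map_eq_zero]
  intro t ht
  classical
  obtain ⟨S, rfl⟩ := TensorProduct.exists_finsupp_left t
  set q : (L →₀ R) →ₗ[R] L := Finsupp.linearCombination R id with hq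
  have hqs : Function.Surjective q := by
    rw [← LinearMap.range_eq_top, hq, Finsupp.range_linearCombination, Set.range_id,
      Submodule.span_univ]
  set u : (L →₀ R) ⊗[R] N := S.sum (fun l a => Finsupp.single l (1:R) ⊗ₜ (a : N)) with hu
  have hu0 : LinearMap.rTensor N q u = 0 := by
    have ht' : (S.sum fun l a => l ⊗ₜ[R] (a : N)) = 0 := by
      simpa [map_finsuppSum] using ht
    rw [hu, map_finsuppSum]
    simpa [hq, Finsupp.linearCombination_single] using ht'
  have humem : u ∈ LinearMap.range (LinearMap.rTensor N (LinearMap.ker q).subtype) := by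
    rw [← ker_rTensor_eq q hqs]
    exact hu0
  obtain ⟨z, hz⟩ := humem
  obtain ⟨c, rfl⟩ := TensorProduct.exists_finset z
  have key : ∀ x : L, (S x : N) = ∑ p ∈ c, ((p.1 : L →₀ R) x) • p.2 := by
    intro x
    set φ : (L →₀ R) ⊗[R] N →ₗ[R] N :=
      (TensorProduct.lid R N).toLinearMap ∘ₗ rTensor N (Finsupp.lapply x) with hφ
    have h1 : φ u = (S x : N) := by
      rw [hu, map_finsuppSum]
      have : ∀ (l : L) (a : A), φ (Finsupp.single l (1:R) ⊗ₜ (a : N)) =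
          if l = x then (a : N) else 0 := by
        intro l a
        simp [hφ, Finsupp.single_apply, ite_smul]
      simp_rw [this]
      rw [Finsupp.sum_ite_eq' S x (fun _ a => (a : N))]
      split
      · rfl
      · next hxs => simp [Finsupp.notMem_support_iff.mp hxs]
    have h2 : φ (rTensor N (LinearMap.ker q).subtype (∑ p ∈ c, p.1 ⊗ₜ p.2)) =
        ∑ p ∈ c, ((p.1 : L →₀ R) x) • p.2 := by
      rw [map_sum, map_sum]
      refine Finset.sum_congr rfl fun p _ => ?_
      simp [hφ]
    rw [← h1, ← hz, h2]
  -- the big finite index set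
  set T : Finset L := S.support ∪ c.biUnion (fun p => (p.1 : L →₀ R).support) with hT
  set eL : Fin T.card → L := fun i => (T.equivFin.symm i : L) with heL
  set pj : Fin c.card → (LinearMap.ker q) × N := fun j => (c.equivFin.symm j : _) with hpj
  have hpjmem : ∀ j, pj j ∈ c := fun j => (c.equivFin.symm j).2
  have hm : ∀ i, (S (eL i) : N) = ∑ j, ((pj j).1 : L →₀ R) (eL i) • (pj j).2 := by
    intro i
    rw [key (eL i), ← Finset.sum_coe_sort c]
    exact (Equiv.sum_comp c.equivFin.symm
      (fun p : {y // y ∈ c} => (((p : (LinearMap.ker q) × N)).1 : L →₀ R) (eL i)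
        • (p : (LinearMap.ker q) × N).2)).symm
  obtain ⟨b, hbA, hb⟩ := h T.card c.card
      (fun i j => ((pj j).1 : L →₀ R) (eL i)) (fun i => (S (eL i) : N))
      (fun i => (S (eL i)).2) ⟨fun j => (pj j).2, hm⟩
  have hbx : ∀ x ∈ T, (S x : N) = ∑ j, (((pj j).1 : L →₀ R) x) • b j := by
    intro x hx
    have := hb (T.equivFin ⟨x, hx⟩)
    simpa [heL] using this
  have hgoal : (S.sum fun l a => l ⊗ₜ[R] a) = (0 : L ⊗[R] A) := by
    rw [Finsupp.sum_of_support_subset S (Finset.subset_union_left) _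
      (fun i _ => TensorProduct.tmul_zero _ i)]
    have hSx : ∀ x ∈ T, S x = ∑ j, (((pj j).1 : L →₀ R) x) • (⟨b j, hbA j⟩ : A) := by
      intro x hx
      apply Subtype.ext
      push_cast
      simpa using hbx x hx
    calc ∑ x ∈ T, x ⊗ₜ[R] S x
        = ∑ x ∈ T, ∑ j, ((((pj j).1 : L →₀ R) x) • x) ⊗ₜ[R] (⟨b j, hbA j⟩ : A) := by
          refine Finset.sum_congr rfl fun x hx => ?_
          rw [hSx x hx, TensorProduct.tmul_sum]
          refine Finset.sum_congr rfl fun j _ => ?_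
          rw [TensorProduct.smul_tmul]
      _ = ∑ j, (∑ x ∈ T, (((pj j).1 : L →₀ R) x) • x) ⊗ₜ[R] (⟨b j, hbA j⟩ : A) := by
          rw [Finset.sum_comm]
          simp_rw [TensorProduct.sum_tmul]
      _ = 0 := by
          have hker : ∀ j, ∑ x ∈ T, (((pj j).1 : L →₀ R) x) • x = (0 : L) := by
            intro j
            have hsupp : ((pj j).1 : L →₀ R).support ⊆ T := by
              intro x hx
              exact Finset.mem_union_right _ (Finset.mem_biUnion.mpr ⟨pj j, hpjmem j, hx⟩)
            have heq : Finsupp.linearCombination R (_root_.id : L → L) ((pj j).1 : L →₀ R)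
                = ∑ x ∈ T, (((pj j).1 : L →₀ R) x) • x := by
              rw [Finsupp.linearCombination_apply]
              exact Finsupp.sum_of_support_subset _ hsupp _ (fun i _ => zero_smul R _)
            rw [← heq]
            exact LinearMap.mem_ker.mp (pj j).1.2
          simp [hker]
  exact hgoal

end Solv

section Card

open Cardinal

variable {ℵ : Cardinal.{0}}

theorem mul_le_aleph (hℵ : ℵ₀ ≤ ℵ) {a b : Cardinal.{0}} (ha : a ≤ ℵ) (hb : b ≤ ℵ) :
    a * b ≤ ℵ :=
  (mul_le_mul' ha hb).trans (le_of_eq (mul_eq_self hℵ))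

theorem mk_fun_le (hℵ : ℵ₀ ≤ ℵ) (X : Type) (m : ℕ) (hX : #X ≤ ℵ) : #(Fin m → X) ≤ ℵ := by
  have h1 : #(Fin m → X) = #X ^ #(Fin m) := (Cardinal.power_def X (Fin m)).symm
  rw [h1]
  refine (power_le_power_right hX).trans ?_
  exact Cardinal.pow_le hℵ (by rw [Cardinal.mk_fin]; exact nat_lt_aleph0 m)

theorem mk_sigma_le (hℵ : ℵ₀ ≤ ℵ) {ι : Type} (f : ι → Type) (hι : #ι ≤ ℵ)
    (hf : ∀ i, #(f i) ≤ ℵ) : #(Σ i, f i) ≤ ℵ := by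
  rw [Cardinal.mk_sigma]
  calc Cardinal.sum (fun i => #(f i)) ≤ Cardinal.sum (fun _ : ι => ℵ) :=
        Cardinal.sum_le_sum _ _ hf
    _ = #ι * ℵ := Cardinal.sum_const' _ _
    _ ≤ ℵ := mul_le_aleph hℵ hι le_rfl

theorem mk_finsupp_le (hℵ : ℵ₀ ≤ ℵ) {α S : Type} [Zero S] (hα : #α ≤ ℵ) (hS : #S ≤ ℵ) :
    #(α →₀ S) ≤ ℵ := by
  cases finite_or_infinite α with
  | inl hfin =>
    have h1 : #(α →₀ S) = #(α → S) := Cardinal.mk_congr Finsupp.equivFunOnFinite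
    have h2 : #(α → S) = #S ^ #α := (Cardinal.power_def S α).symm
    rw [h1, h2]
    refine (power_le_power_right hS).trans (Cardinal.pow_le hℵ ?_)
    exact Cardinal.lt_aleph0_of_finite α
  | inr hinf =>
    rcases subsingleton_or_nontrivial S with hsub | hnt
    · haveI : Subsingleton (α →₀ S) := ⟨fun f g => Finsupp.ext fun a => Subsingleton.elim _ _⟩
      exact (Cardinal.mk_le_aleph0).trans hℵ
    · rw [Cardinal.mk_finsupp_of_infinite]
      exact max_le hα hS

variable {R : Type} [CommRing R] {N : Type} [AddCommGroup N] [Module R N]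

theorem mk_span_le (hℵ : ℵ₀ ≤ ℵ) (hR : #R ≤ ℵ) {s : Set N} (hs : #s ≤ ℵ) :
    #(Submodule.span R s) ≤ ℵ := by
  have h1 : (Submodule.span R s : Submodule R N)
      = LinearMap.range (Finsupp.linearCombination R ((↑) : s → N)) := by
    rw [Finsupp.range_linearCombination, Subtype.range_coe]
  have h2 : #(Submodule.span R s) ≤ #(s →₀ R) := by
    rw [h1]
    exact Cardinal.mk_le_of_surjective
      (LinearMap.surjective_rangeRestrict (Finsupp.linearCombination R ((↑) : s → N)))
  exact h2.trans (mk_finsupp_le hℵ hs hR)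

theorem mk_sup_le (hℵ : ℵ₀ ≤ ℵ) (hR : #R ≤ ℵ) {A B : Submodule R N}
    (hA : #A ≤ ℵ) (hB : #B ≤ ℵ) : #(A ⊔ B : Submodule R N) ≤ ℵ := by
  have h1 : (A ⊔ B : Submodule R N) = Submodule.span R ((A : Set N) ∪ (B : Set N)) := by
    rw [Submodule.span_union, Submodule.span_eq, Submodule.span_eq]
  rw [h1]
  refine mk_span_le hℵ hR ?_
  refine (Cardinal.mk_union_le _ _).trans ?_
  exact (add_le_add hA hB).trans (le_of_eq (Cardinal.add_eq_self hℵ))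

theorem mk_iSup_le (hℵ : ℵ₀ ≤ ℵ) (hR : #R ≤ ℵ) {ι : Type} {S : ι → Submodule R N}
    (hι : #ι ≤ ℵ) (hS : ∀ i, #(S i) ≤ ℵ) : #(⨆ i, S i : Submodule R N) ≤ ℵ := by
  rw [Submodule.iSup_eq_span]
  refine mk_span_le hℵ hR ?_
  refine (Cardinal.mk_iUnion_le_sum_mk).trans ?_
  calc Cardinal.sum (fun i => #(S i : Set N)) ≤ Cardinal.sum (fun _ : ι => ℵ) :=
        Cardinal.sum_le_sum _ _ (fun i => hS i)
    _ = #ι * ℵ := Cardinal.sum_const' _ _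
    _ ≤ ℵ := mul_le_aleph hℵ hι le_rfl

theorem mk_map_le {N' : Type} [AddCommGroup N'] [Module R N'] (f : N →ₗ[R] N') (A : Submodule R N) :
    #(Submodule.map f A) ≤ #A := by
  have := Cardinal.mk_image_le (f := ⇑f) (s := (A : Set N))
  rwa [← Submodule.map_coe] at this

end Card

section Pstep

open Cardinal

variable {R : Type} [CommRing R] {N : Type} [AddCommGroup N] [Module R N]

/-- The index type of finite linear systems with constants in `A`. -/
abbrev SysIdx (A : Submodule R N) : Type :=
  Σ n : ℕ, Σ k : ℕ, (Fin n → Fin k → R) × (Fin n → A)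

open Classical in
/-- A chosen solution (in `N`) of the system `p`, if one exists. -/
noncomputable def pstepSol (A : Submodule R N) (p : SysIdx A) : Fin p.2.1 → N :=
  if h : ∃ m : Fin p.2.1 → N, ∀ i, (p.2.2.2 i : N) = ∑ j, p.2.2.1 i j • m j then
    Classical.choose h else 0

/-- One-step purification closure of `A`. -/
noncomputable def pstep (A : Submodule R N) : Submodule R N :=
  A ⊔ Submodule.span R
    (Set.range (fun q : Σ p : SysIdx A, Fin p.2.1 => pstepSol A q.1 q.2))

theorem le_pstep (A : Submodule R N) : A ≤ pstep A := le_sup_left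

theorem solvIn_pstep (A : Submodule R N) : SolvIn A (pstep A) := by
  intro n k r a ha hsol
  set p : SysIdx A := ⟨n, k, r, fun i => ⟨a i, ha i⟩⟩ with hp
  have hex : ∃ m : Fin p.2.1 → N, ∀ i, (p.2.2.2 i : N) = ∑ j, p.2.2.1 i j • m j := hsol
  refine ⟨pstepSol A p, fun j => ?_, fun i => ?_⟩
  · exact Submodule.mem_sup_right (Submodule.subset_span ⟨⟨p, j⟩, rfl⟩)
  · have hspec := Classical.choose_spec hex i
    simp only [pstepSol]
    rw [dif_pos hex]
    exact hspec

theorem mk_pstep_le {ℵ : Cardinal.{0}} (hℵ : ℵ₀ ≤ ℵ) (hR : #R ≤ ℵ) (A : Submodule R N)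
    (hA : #A ≤ ℵ) : #(pstep A) ≤ ℵ := by
  have hidx : #(SysIdx A) ≤ ℵ := by
    refine mk_sigma_le hℵ _ ((mk_nat.le.trans hℵ)) (fun n => ?_)
    refine mk_sigma_le hℵ _ ((mk_nat.le.trans hℵ)) (fun k => ?_)
    have h1 : #(Fin n → Fin k → R) ≤ ℵ := mk_fun_le hℵ _ _ (mk_fun_le hℵ _ _ hR)
    have h2 : #(Fin n → A) ≤ ℵ := mk_fun_le hℵ _ _ hA
    calc #((Fin n → Fin k → R) × (Fin n → A)) = #(Fin n → Fin k → R) * #(Fin n → A) :=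
          by rw [Cardinal.mk_prod, Cardinal.lift_id, Cardinal.lift_id]
      _ ≤ ℵ := mul_le_aleph hℵ h1 h2
  have hJ : #(Σ p : SysIdx A, Fin p.2.1) ≤ ℵ :=
    mk_sigma_le hℵ _ hidx (fun p => (Cardinal.mk_fin _).le.trans
      ((Cardinal.nat_lt_aleph0 _).le.trans hℵ))
  refine mk_sup_le hℵ hR hA ?_
  refine mk_span_le hℵ hR ?_
  exact Cardinal.mk_range_le.trans hJ

end Pstep

section Rep

open Cardinal

variable {V : Type} [Quiver.{0} V] {R : Type} [CommRing R]

variable (M : QRep V R)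

/-- One-step closure under the arrow maps. -/
noncomputable def astep (A : ∀ w : V, Submodule R (M.obj ((Paths.of V).obj w))) (w : V) :
    Submodule R (M.obj ((Paths.of V).obj w)) :=
  A w ⊔ ⨆ p : Σ u : V, u ⟶ w,
    Submodule.map (M.map (Quiver.Hom.toPath p.2)).hom (A p.1)

/-- The chain of approximations. -/
noncomputable def chainC (v : V) (x : M.obj ((Paths.of V).obj v)) :
    ℕ → ∀ w : V, Submodule R (M.obj ((Paths.of V).obj w))
  | 0 => fun w => ⨆ _ : v = w, Submodule.span R {‹v = w› ▸ x}
  | (n+1) => fun w => astep M (chainC v x n) w ⊔ pstep (chainC v x n w)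

variable (v : V) (x : M.obj ((Paths.of V).obj v))

theorem chainC_mono (w : V) : Monotone (fun n => chainC M v x n w) := by
  apply monotone_nat_of_le_succ
  intro n
  exact le_trans le_sup_left (le_sup_left : astep M (chainC M v x n) w ≤ _)

theorem mem_chain_iff (w : V) (y : M.obj ((Paths.of V).obj w)) :
    y ∈ (⨆ n, chainC M v x n w) ↔ ∃ n, y ∈ chainC M v x n w :=
  Submodule.mem_iSup_of_chain ⟨fun n => chainC M v x n w, chainC_mono M v x w⟩ y

end Rep

section Main

open Cardinal

variable {V : Type} [Quiver.{0} V] {R : Type} [CommRing R]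

theorem mk_chainC_le (ℵ : Cardinal.{0}) (hℵ : Cardinal.aleph0 ≤ ℵ)
    (hR : Cardinal.mk R ≤ ℵ)
    (hE : Cardinal.mk (Σ v : V, Σ w : V, v ⟶ w) ≤ ℵ)
    (M : QRep V R) (v : V) (x : M.obj ((Paths.of V).obj v)) :
    ∀ (n : ℕ) (w : V), #(chainC M v x n w) ≤ ℵ := by
  intro n
  induction n with
  | zero =>
    intro w
    by_cases h : v = w
    · simp only [chainC]
      rw [iSup_pos h]
      refine mk_span_le hℵ hR ?_
      rw [Cardinal.mk_singleton]
      exact le_trans (le_of_lt Cardinal.one_lt_aleph0) hℵ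
    · simp only [chainC]
      rw [iSup_neg h]
      have hb : (⊥ : Submodule R (M.obj ((Paths.of V).obj w))) = Submodule.span R (∅ : Set _) := by
        rw [Submodule.span_empty]
      rw [hb]
      refine mk_span_le hℵ hR ?_
      simp
  | succ n ih =>
    intro w
    simp only [chainC]
    refine mk_sup_le hℵ hR ?_ (mk_pstep_le hℵ hR _ (ih w))
    rw [astep]
    refine mk_sup_le hℵ hR (ih w) ?_
    refine mk_iSup_le hℵ hR ?_ ?_
    · refine le_trans (Cardinal.mk_le_of_injective (f := fun p : Σ u : V, u ⟶ w =>
        (⟨p.1, w, p.2⟩ : Σ a : V, Σ b : V, a ⟶ b)) ?_) hE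
      rintro ⟨u₁, e₁⟩ ⟨u₂, e₂⟩ h
      obtain ⟨rfl, h2⟩ := Sigma.mk.inj_iff.mp h
      obtain ⟨-, h3⟩ := Sigma.mk.inj_iff.mp (eq_of_heq h2)
      obtain rfl := eq_of_heq h3
      rfl
    · intro p
      exact le_trans (mk_map_le _ _) (ih p.1)

end Main


/-- Let `ℵ` be an infinite cardinal with `ℵ ≥ sup{|R|, |V|, |E|}`.
Then for every representation `M` of the quiver and every `x ∈ M(v)`, there is a
subrepresentation `P ⊆ M` with `x ∈ P(v)`, `|P| ≤ ℵ`, and `P(w)` a pure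
submodule of `M(w)` for every vertex `w`. -/
theorem stmt14 {V : Type} [Quiver.{0} V] {R : Type} [CommRing R]
    (ℵ : Cardinal.{0}) (hℵ : Cardinal.aleph0 ≤ ℵ)
    (hR : Cardinal.mk R ≤ ℵ) (hV : Cardinal.mk V ≤ ℵ)
    (hE : Cardinal.mk (Σ v : V, Σ w : V, v ⟶ w) ≤ ℵ)
    (M : QRep V R) (v : V) (x : M.obj ((Paths.of V).obj v)) :
    ∃ P : Subrep M, x ∈ P.carrier v ∧
      Cardinal.mk (Σ w : V, P.carrier w) ≤ ℵ ∧
      ∀ w : V, IsPureSubmodule (P.carrier w) := by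
  classical
  set P : ∀ w : V, Submodule R (M.obj ((Paths.of V).obj w)) :=
    fun w => ⨆ n, chainC M v x n w with hP
  have hmem : ∀ (w : V) (y : M.obj ((Paths.of V).obj w)),
      y ∈ P w ↔ ∃ n, y ∈ chainC M v x n w := fun w y => mem_chain_iff M v x w y
  refine ⟨⟨P, ?_⟩, ?_, ?_, ?_⟩
  · intro u w e y hy
    obtain ⟨n, hn⟩ := (hmem u y).mp hy
    refine (hmem w _).mpr ⟨n+1, ?_⟩
    show _ ∈ astep M (chainC M v x n) w ⊔ pstep (chainC M v x n w)
    refine Submodule.mem_sup_left (Submodule.mem_sup_right ?_)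
    refine Submodule.mem_iSup_of_mem ⟨u, e⟩ ?_
    exact Submodule.mem_map_of_mem hn
  · exact (hmem v x).mpr
      ⟨0, Submodule.mem_iSup_of_mem rfl (Submodule.mem_span_singleton_self x)⟩
  · refine mk_sigma_le hℵ _ hV (fun w => ?_)
    exact mk_iSup_le hℵ hR ((le_of_eq Cardinal.mk_nat).trans hℵ)
      (fun n => mk_chainC_le ℵ hℵ hR hE M v x n w)
  · intro w
    apply isPure_of_solv
    intro n k r a ha hsol
    choose g hg using fun i => (hmem w (a i)).mp (ha i)
    set Nm := Finset.univ.sup g with hNm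
    have haN : ∀ i, a i ∈ chainC M v x Nm w := fun i =>
      chainC_mono M v x w (Finset.le_sup (Finset.mem_univ i)) (hg i)
    obtain ⟨b, hbB, hba⟩ := solvIn_pstep (chainC M v x Nm w) n k r a haN hsol
    refine ⟨b, fun j => ?_, hba⟩
    refine (hmem w (b j)).mpr ⟨Nm+1, ?_⟩
    show _ ∈ astep M (chainC M v x Nm) w ⊔ pstep (chainC M v x Nm w)
    exact Submodule.mem_sup_right (hbB j)
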